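/- Let n ≥ 4 and let I' be an order ideal of F₃(n) with max ⋃ I' = n. Let G' be the set of ⪯-maximal elements of I' and H' the set of ⪯-minimal elements of F₃(n)∖I'. Then #G' + #H' ≤ n−3. -/
import Mathlib


/-- The 4-element set `{i, i+1, j, j+1}`, denoted `(i,j)` in the paper. -/
def pairSet (i j : ℕ) : Finset ℕ := {i, i + 1, j, j + 1}

/-- Membership in the collection `F₃(n)` of 4-element subsets of `{1,…,n}`
of the form `{i, i+1, j, j+1}` with `1 ≤ i`, `i+2 ≤ j`, `j+1 ≤ n`. -/
def memF3 (n : ℕ) (f : Finset ℕ) : Prop :=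
  ∃ i j : ℕ, 1 ≤ i ∧ i + 2 ≤ j ∧ j + 1 ≤ n ∧ f = pairSet i j

/-- The partial order `⪯` on finite subsets of `ℕ` of equal cardinality:
componentwise comparison of the increasingly sorted lists of elements. -/
def squeezedLE (f g : Finset ℕ) : Prop :=
  List.Forall₂ (· ≤ ·) (f.sort (· ≤ ·)) (g.sort (· ≤ ·))

/-- `I` is an order ideal of `F₃(n)` w.r.t. `⪯`. -/
def IsIdealF3 (n : ℕ) (I : Set (Finset ℕ)) : Prop :=
  (∀ f ∈ I, memF3 n f) ∧
  ∀ f g : Finset ℕ, memF3 n f → g ∈ I → squeezedLE f g → f ∈ I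

/-- `max ⋃ I`, the largest vertex used by the collection `I`. -/
noncomputable def maxVertex (I : Set (Finset ℕ)) : ℕ :=
  sSup (⋃ f ∈ I, (f : Set ℕ))

/-- `0 * K = {{0} ∪ f : f ∈ K}`. -/
def coneZero (K : Set (Finset ℕ)) : Set (Finset ℕ) := (insert 0) '' K

/-- A facet of the squeezed sphere `S(I)`: a 4-element set contained in
exactly one member of `I`. -/
def isFacetOfS (I : Set (Finset ℕ)) (F : Finset ℕ) : Prop :=
  F.card = 4 ∧ ∃! g, g ∈ I ∧ F ⊆ g

/-- The gap of `(i,j) = {i, i+1, j, j+1}`, i.e. `j - i - 2`. -/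
def gapOf (f : Finset ℕ) : ℕ :=
  f.sup id - (f.sort (· ≤ ·)).headI - 3

/-- `m` is a `⪯`-minimal element of the set `S`. -/
def IsMinIn (S : Set (Finset ℕ)) (m : Finset ℕ) : Prop :=
  m ∈ S ∧ ∀ x ∈ S, squeezedLE x m → x = m

/-- `m` is a `⪯`-maximal element of the set `S`. -/
def IsMaxIn (S : Set (Finset ℕ)) (m : Finset ℕ) : Prop :=
  m ∈ S ∧ ∀ x ∈ S, squeezedLE m x → x = m


lemma pairSet_sort {i j : ℕ} (h : i + 2 ≤ j) :
    (pairSet i j).sort (· ≤ ·) = [i, i+1, j, j+1] := by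
  have hnd : ([i, i+1, j, j+1] : List ℕ).Nodup := by
    simp [List.nodup_cons]; omega
  have htf : ([i, i+1, j, j+1] : List ℕ).toFinset = pairSet i j := by
    simp [pairSet, Finset.insert_comm]
  rw [← htf, List.toFinset_sort _ hnd]
  simp [List.Pairwise, List.pairwise_cons]; omega

lemma squeezedLE_pair {i j i' j' : ℕ} (h : i + 2 ≤ j) (h' : i' + 2 ≤ j') :
    squeezedLE (pairSet i j) (pairSet i' j') ↔ i ≤ i' ∧ j ≤ j' := by
  rw [squeezedLE, pairSet_sort h, pairSet_sort h']
  constructor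
  · intro hf
    rcases hf with _ | ⟨h1, _ | ⟨h2, _ | ⟨h3, _⟩⟩⟩
    exact ⟨h1, h3⟩
  · rintro ⟨h1, h2⟩
    exact List.Forall₂.cons h1 (List.Forall₂.cons (by omega)
      (List.Forall₂.cons h2 (List.Forall₂.cons (by omega) List.Forall₂.nil)))

lemma pairSet_inj {i j i' j' : ℕ} (h : i + 2 ≤ j) (h' : i' + 2 ≤ j')
    (he : pairSet i j = pairSet i' j') : i = i' ∧ j = j' := by
  have := pairSet_sort h
  rw [he, pairSet_sort h'] at this
  injection this with a b
  injection b with c d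
  injection d with e _
  exact ⟨a.symm, e.symm⟩

/-- gap extraction function -/
noncomputable def gphi (f : Finset ℕ) : ℕ :=
  (f.sort (· ≤ ·)).getD 2 0 - (f.sort (· ≤ ·)).headI - 2

lemma gphi_pair {i j : ℕ} (h : i + 2 ≤ j) : gphi (pairSet i j) = j - i - 2 := by
  rw [gphi, pairSet_sort h]
  rfl

lemma cross_case (n : ℕ) (I : Set (Finset ℕ)) (hI : IsIdealF3 n I)
    {i j i' j' : ℕ} (hi : 1 ≤ i) (hij : i + 2 ≤ j) (hjn : j + 1 ≤ n)
    (hi' : 1 ≤ i') (hij' : i' + 2 ≤ j') (hjn' : j' + 1 ≤ n)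
    (hgap : j + i' = j' + i)
    (hmaxg : IsMaxIn I (pairSet i j))
    (hminh : IsMinIn {x | memF3 n x ∧ x ∉ I} (pairSet i' j')) : False := by
  obtain ⟨hIF, hid⟩ := hI
  obtain ⟨hgI, hmax2⟩ := hmaxg
  obtain ⟨⟨hmemh, hnotI⟩, hmin2⟩ := hminh
  rcases le_or_gt i' i with hle | hlt
  · exact hnotI (hid _ _ ⟨i', j', hi', hij', hjn', rfl⟩ hgI
      ((squeezedLE_pair hij' hij).mpr ⟨hle, by omega⟩))
  · have hij'' : (i' - 1) + 2 ≤ j' - 1 := by omega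
    have hmemh' : memF3 n (pairSet (i' - 1) (j' - 1)) :=
      ⟨i' - 1, j' - 1, by omega, hij'', by omega, rfl⟩
    have hh'I : pairSet (i' - 1) (j' - 1) ∈ I := by
      by_contra hc
      have := hmin2 _ ⟨hmemh', hc⟩ ((squeezedLE_pair hij'' hij').mpr ⟨by omega, by omega⟩)
      have := pairSet_inj hij'' hij' this
      omega
    have heq : pairSet (i' - 1) (j' - 1) = pairSet i j :=
      hmax2 _ hh'I ((squeezedLE_pair hij hij'').mpr ⟨by omega, by omega⟩)
    obtain ⟨hei, hej⟩ := pairSet_inj hij'' hij heq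
    have hijw : i + 2 ≤ j + 1 := by omega
    have hmemw : memF3 n (pairSet i (j + 1)) := ⟨i, j + 1, hi, hijw, by omega, rfl⟩
    by_cases hwI : pairSet i (j + 1) ∈ I
    · have := hmax2 _ hwI ((squeezedLE_pair hij hijw).mpr ⟨le_refl _, by omega⟩)
      have := pairSet_inj hijw hij this
      omega
    · have := hmin2 _ ⟨hmemw, hwI⟩ ((squeezedLE_pair hijw hij').mpr ⟨by omega, by omega⟩)
      have := pairSet_inj hijw hij' this
      omega

/-- **Observation 2.** If `G'` is the set of `⪯`-maximal elements of an order
ideal `I'` of `F₃(n)` with `max ⋃ I' = n`, and `H'` is the set of `⪯`-minimal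
elements of `F₃(n) ∖ I'`, then `#G' + #H' ≤ n - 3`. -/
theorem card_maximal_add_card_minimal (n : ℕ) (hn : 4 ≤ n)
    (I : Set (Finset ℕ)) (hI : IsIdealF3 n I) (hmax : maxVertex I = n) :
    {g : Finset ℕ | IsMaxIn I g}.Finite ∧
    {h : Finset ℕ | IsMinIn {x | memF3 n x ∧ x ∉ I} h}.Finite ∧
    {g : Finset ℕ | IsMaxIn I g}.ncard +
      {h : Finset ℕ | IsMinIn {x | memF3 n x ∧ x ∉ I} h}.ncard ≤ n - 3 := by
  classical
  set S1 := {g : Finset ℕ | IsMaxIn I g} with hS1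
  set S2 := {h : Finset ℕ | IsMinIn {x | memF3 n x ∧ x ∉ I} h} with hS2
  have hmem : ∀ f ∈ S1 ∪ S2, memF3 n f := by
    rintro f (hf | hf)
    · exact hI.1 f hf.1
    · exact hf.1.1
  have hinj : Set.InjOn gphi (S1 ∪ S2) := by
    intro f hf f' hf' heq
    obtain ⟨i, j, hi, hij, hjn, rfl⟩ := hmem f hf
    obtain ⟨i', j', hi', hij', hjn', rfl⟩ := hmem f' hf'
    rw [gphi_pair hij, gphi_pair hij'] at heq
    have hgap : j + i' = j' + i := by omega
    rcases hf with hf | hf <;> rcases hf' with hf' | hf'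
    · rcases le_or_gt i i' with hle | hlt
      · exact (hf.2 _ hf'.1 ((squeezedLE_pair hij hij').mpr ⟨hle, by omega⟩)).symm
      · exact hf'.2 _ hf.1 ((squeezedLE_pair hij' hij).mpr ⟨by omega, by omega⟩)
    · exact absurd (cross_case n I hI hi hij hjn hi' hij' hjn' hgap hf hf') (fun h => h.elim)
    · exact absurd (cross_case n I hI hi' hij' hjn' hi hij hjn (by omega) hf' hf)
        (fun h => h.elim)
    · rcases le_or_gt i i' with hle | hlt
      · exact hf'.2 _ hf.1 ((squeezedLE_pair hij hij').mpr ⟨hle, by omega⟩)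
      · exact (hf.2 _ hf'.1 ((squeezedLE_pair hij' hij).mpr ⟨by omega, by omega⟩)).symm
  have himg : gphi '' (S1 ∪ S2) ⊆ ↑(Finset.range (n - 3)) := by
    rintro x ⟨f, hf, rfl⟩
    obtain ⟨i, j, hi, hij, hjn, rfl⟩ := hmem f hf
    rw [gphi_pair hij]
    simp only [Finset.coe_range, Set.mem_Iio]
    omega
  have hfin : (S1 ∪ S2).Finite :=
    Set.Finite.of_finite_image ((Finset.range (n - 3)).finite_toSet.subset himg) hinj
  have h1 : S1.Finite := hfin.subset Set.subset_union_left
  have h2 : S2.Finite := hfin.subset Set.subset_union_right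
  have hd : Disjoint S1 S2 := by
    rw [Set.disjoint_left]
    intro f hf1 hf2
    exact hf2.1.2 hf1.1
  refine ⟨h1, h2, ?_⟩
  rw [← Set.ncard_union_eq hd h1 h2]
  calc (S1 ∪ S2).ncard = (gphi '' (S1 ∪ S2)).ncard := (Set.ncard_image_of_injOn hinj).symm
    _ ≤ (↑(Finset.range (n - 3)) : Set ℕ).ncard :=
        Set.ncard_le_ncard himg (Finset.range (n - 3)).finite_toSet
    _ = n - 3 := by rw [Set.ncard_coe_finset, Finset.card_range]
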